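/- Let M ∈ ℕ, R = {r ∈ ℤ_M : gcd(r, M) = 1}, and let x, x' ∈ ℤ_M with gcd(x, M) = gcd(x', M) = m. Then the set R_{x,x'} = {r ∈ R : r·x = x'} has cardinality φ(M)/φ(M/m), where φ is Euler's totient function. -/
import Mathlib

open ZMod

lemma aux_nat (M m k : ℕ) (hm : m ∣ M) (hm0 : m ≠ 0) : M ∣ m * k ↔ (M / m) ∣ k := by
  obtain ⟨n, rfl⟩ := hm
  rw [Nat.mul_div_cancel_left _ (Nat.pos_of_ne_zero hm0)]
  exact mul_dvd_mul_iff_left hm0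

lemma aux_exists (M : ℕ) [NeZero M] (m : ℕ) (a : ZMod M) (h : Nat.gcd a.val M = m) :
    ∃ u : (ZMod M)ˣ, a = u * (m : ZMod M) := by
  obtain ⟨d, hd, u, hu, ha⟩ := ZMod.eq_unit_mul_divisor a
  have hgcd : Nat.gcd a.val M = d := by
    rw [ha, ZMod.val_mul, ← Nat.gcd_rec, Nat.gcd_comm]
    have hcop : Nat.Coprime (hu.unit : ZMod M).val M := ZMod.val_coe_unit_coprime hu.unit
    rw [show u = (hu.unit : ZMod M) from hu.unit_spec.symm]
    rw [Nat.Coprime.gcd_mul_left_cancel _ hcop, ZMod.val_natCast,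
      ← Nat.gcd_rec, Nat.gcd_eq_right hd]
  exact ⟨hu.unit, by rw [← h, hgcd, ha, hu.unit_spec]⟩

lemma aux_mul_eq_zero (M m : ℕ) [NeZero M] (hm : m ∣ M) (hm0 : m ≠ 0) (c : ZMod M) :
    (m : ZMod M) * c = 0 ↔ (M / m) ∣ c.val := by
  conv_lhs => rw [← ZMod.natCast_zmod_val c, ← Nat.cast_mul]
  rw [ZMod.natCast_eq_zero_iff]
  exact aux_nat M m c.val hm hm0

theorem stmt3 (M : ℕ) [NeZero M] (m : ℕ) (x x' : ZMod M)
    (hx : Nat.gcd x.val M = m) (hx' : Nat.gcd x'.val M = m) :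
    (Finset.univ.filter fun r : ZMod M => Nat.gcd r.val M = 1 ∧ r * x = x').card
      = M.totient / (M / m).totient := by
  set n := M / m with hn
  have hmM : m ∣ M := hx ▸ Nat.gcd_dvd_right _ _
  have hm0 : m ≠ 0 := by
    rintro rfl
    exact (NeZero.ne M) (Nat.eq_zero_of_zero_dvd hmM)
  have hnM : n ∣ M := Nat.div_dvd_of_dvd hmM
  have hn0 : NeZero n := ⟨Nat.div_ne_zero_iff_of_dvd hmM |>.mpr ⟨NeZero.ne M, hm0⟩⟩
  obtain ⟨u, hu⟩ := aux_exists M m x hx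
  obtain ⟨u', hu'⟩ := aux_exists M m x' hx'
  have hunit : ∀ r : ZMod M, Nat.gcd r.val M = 1 ↔ IsUnit r := by
    intro r
    have h := ZMod.isUnit_iff_coprime r.val M
    rw [ZMod.natCast_zmod_val] at h
    exact ⟨h.mpr, h.mp⟩
  have hcoll : ∀ (a b : (ZMod M)ˣ) (r : ZMod M), (↑a : ZMod M) * (↑b * r) = ↑(a * b) * r := by
    intro a b r
    rw [Units.val_mul, mul_assoc]
  -- step 1 : bijection with stabilizer
  have step1 : (Finset.univ.filter fun r : ZMod M => Nat.gcd r.val M = 1 ∧ r * x = x').card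
      = (Finset.univ.filter fun r : ZMod M => Nat.gcd r.val M = 1 ∧ r * x = x).card := by
    apply Finset.card_bij' (fun r _ => (↑(u * u'⁻¹) : ZMod M) * r)
      (fun r _ => (↑(u' * u⁻¹) : ZMod M) * r)
    · intro r hr
      simp only [Finset.mem_filter, Finset.mem_univ, true_and] at hr ⊢
      obtain ⟨h1, h2⟩ := hr
      refine ⟨?_, ?_⟩
      · rw [hunit] at h1 ⊢
        exact (u * u'⁻¹).isUnit.mul h1
      · rw [mul_assoc, h2, hu', hcoll, hu]
        congr 1
        simp [mul_assoc]
    · intro r hr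
      simp only [Finset.mem_filter, Finset.mem_univ, true_and] at hr ⊢
      obtain ⟨h1, h2⟩ := hr
      refine ⟨?_, ?_⟩
      · rw [hunit] at h1 ⊢
        exact (u' * u⁻¹).isUnit.mul h1
      · rw [mul_assoc, h2, hu, hcoll, hu']
        congr 1
        simp [mul_assoc]
    · intro r _
      rw [hcoll]
      simp [mul_assoc]
    · intro r _
      rw [hcoll]
      simp [mul_assoc]
  rw [step1]
  -- step 2 : stabilizer condition ↔ cast to ZMod n is 1
  have step2 : ∀ r : ZMod M, r * x = x ↔ ZMod.castHom hnM (ZMod n) r = 1 := by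
    intro r
    rw [← sub_eq_zero, ← sub_one_mul, hu]
    rw [show (r - 1) * ((u : ZMod M) * (m : ZMod M)) = (u : ZMod M) * ((m : ZMod M) * (r - 1)) by
      ring]
    rw [Units.mul_right_eq_zero, aux_mul_eq_zero M m hmM hm0, ← hn,
      ← ZMod.natCast_eq_zero_iff, ZMod.natCast_val, ← ZMod.castHom_apply (h := hnM),
      map_sub, map_one, sub_eq_zero]
  -- step 3 : cardinality of the kernel of unitsMap
  have hsurj := ZMod.unitsMap_surjective (m := M) hnM
  have hcard : Nat.card (MonoidHom.ker (ZMod.unitsMap hnM)) = M.totient / n.totient := by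
    have h1 : Nat.card (ZMod M)ˣ
        = Nat.card ((ZMod M)ˣ ⧸ MonoidHom.ker (ZMod.unitsMap hnM))
          * Nat.card (MonoidHom.ker (ZMod.unitsMap hnM)) :=
      Subgroup.card_eq_card_quotient_mul_card_subgroup _
    have h2 : Nat.card ((ZMod M)ˣ ⧸ MonoidHom.ker (ZMod.unitsMap hnM)) = Nat.card (ZMod n)ˣ :=
      Nat.card_congr (QuotientGroup.quotientKerEquivOfSurjective _ hsurj).toEquiv
    have hM : Nat.card (ZMod M)ˣ = M.totient := by
      rw [Nat.card_eq_fintype_card, ZMod.card_units_eq_totient]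
    have hN : Nat.card (ZMod n)ˣ = n.totient := by
      rw [Nat.card_eq_fintype_card, ZMod.card_units_eq_totient]
    rw [h2, hM, hN] at h1
    rw [h1, mul_comm, Nat.mul_div_cancel _ (Nat.totient_pos.mpr (Nat.pos_of_ne_zero hn0.ne))]
  rw [← hcard]
  -- final : filter card = card of kernel
  have hequiv : {r : ZMod M // Nat.gcd r.val M = 1 ∧ r * x = x}
      ≃ MonoidHom.ker (ZMod.unitsMap hnM) := by
    refine ⟨fun p => ⟨((hunit p.1).mp p.2.1).unit, ?_⟩,
      fun k => ⟨(k.1 : ZMod M), ?_⟩, ?_, ?_⟩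
    · rw [MonoidHom.mem_ker]
      ext
      simp only [ZMod.unitsMap_def, Units.coe_map, MonoidHom.coe_coe, Units.val_one,
        IsUnit.unit_spec]
      exact (step2 p.1).mp p.2.2
    · refine ⟨(hunit _).mpr k.1.isUnit, (step2 _).mpr ?_⟩
      have h := k.2
      rw [MonoidHom.mem_ker] at h
      exact congrArg Units.val h
    · intro p
      ext
      simp
    · intro k
      ext
      simp
  rw [← Fintype.card_subtype, ← Nat.card_eq_fintype_card, Nat.card_congr hequiv]
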